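/- Let ν be a Lévy measure with tail ν̄, let T > 0 and let f be a continuous function on [0,T]. Let t₀ be the smallest point of [0,T] at which f attains its maximum, and suppose t₀ > 0. Suppose that the non-local derivative ∂_t^Φ f(t) := (d/dt) ∫_0^t ν̄(t−s)(f(s) − f(0)) ds is well-defined and continuous on an open interval I ⊂ (0,T) containing t₀. Then ∂_t^Φ f(t₀) ≥ 0. -/

import Mathlib

open MeasureTheory Set
open scoped ENNReal

/-- The tail of a Lévy measure: `ν̄(s) = ν((s,∞))`. -/
noncomputable def nubar (ν : Measure ℝ) (s : ℝ) : ℝ := (ν (Set.Ioi s)).toReal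

/-- A Lévy measure on `(0,∞)`: it gives no mass to `(-∞,0]` and integrates `min(s,1)`. -/
def IsLevyMeasure (ν : Measure ℝ) : Prop :=
  ν (Set.Iic 0) = 0 ∧ ∫⁻ s in Set.Ioi (0:ℝ), ENNReal.ofReal (min s 1) ∂ν ≠ ⊤

lemma levy_tail_ne_top {ν : Measure ℝ} (hν : IsLevyMeasure ν) {s : ℝ} (hs : 0 < s) :
    ν (Set.Ioi s) ≠ ⊤ := by
  have hmin : (0:ℝ) < min s 1 := lt_min hs one_pos
  have h1 : ENNReal.ofReal (min s 1) * ν (Set.Ioi s)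
      ≤ ∫⁻ x in Set.Ioi s, ENNReal.ofReal (min x 1) ∂ν := by
    rw [← MeasureTheory.setLIntegral_const]
    refine MeasureTheory.setLIntegral_mono (by fun_prop) ?_
    intro x hx
    exact ENNReal.ofReal_le_ofReal (min_le_min (le_of_lt hx) le_rfl)
  have h2 : ∫⁻ x in Set.Ioi s, ENNReal.ofReal (min x 1) ∂ν
      ≤ ∫⁻ x in Set.Ioi (0:ℝ), ENNReal.ofReal (min x 1) ∂ν := by
    exact MeasureTheory.lintegral_mono' (Measure.restrict_mono (Set.Ioi_subset_Ioi hs.le) le_rfl)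
      le_rfl
  intro htop
  have : (⊤ : ℝ≥0∞) ≤ ∫⁻ x in Set.Ioi (0:ℝ), ENNReal.ofReal (min x 1) ∂ν := by
    calc (⊤ : ℝ≥0∞) = ENNReal.ofReal (min s 1) * ⊤ := by
          rw [ENNReal.mul_top (ENNReal.ofReal_pos.mpr hmin).ne.symm]
      _ = ENNReal.ofReal (min s 1) * ν (Set.Ioi s) := by rw [htop]
      _ ≤ _ := le_trans h1 h2
  exact hν.2 (top_le_iff.mp this)

lemma nubar_nonneg (ν : Measure ℝ) (s : ℝ) : 0 ≤ nubar ν s := ENNReal.toReal_nonneg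

lemma nubar_measurable (ν : Measure ℝ) : Measurable (nubar ν) := by
  have h : Antitone (fun s : ℝ => ν (Set.Ioi s)) := by
    intro x y hxy
    exact measure_mono (Set.Ioi_subset_Ioi hxy)
  exact h.measurable.ennreal_toReal

lemma nubar_anti {ν : Measure ℝ} (hν : IsLevyMeasure ν) {x y : ℝ} (hx : 0 < x) (hxy : x ≤ y) :
    nubar ν y ≤ nubar ν x := by
  refine ENNReal.toReal_le_toReal ?_ (levy_tail_ne_top hν hx) |>.mpr ?_
  · exact ne_top_of_le_ne_top (levy_tail_ne_top hν hx) (measure_mono (Set.Ioi_subset_Ioi hxy))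
  · exact measure_mono (Set.Ioi_subset_Ioi hxy)

lemma levy_sigmaFinite {ν : Measure ℝ} (hν : IsLevyMeasure ν) :
    SigmaFinite (ν.restrict (Set.Ioi 0)) := by
  refine ⟨⟨⟨fun n => Set.Iic 0 ∪ Set.Ioi (1/(n+1) : ℝ), fun _ => trivial, ?_, ?_⟩⟩⟩
  · intro n
    have h1 : (ν.restrict (Set.Ioi 0)) (Set.Iic 0 ∪ Set.Ioi (1/(n+1) : ℝ))
        ≤ ν (Set.Iic 0 ∩ Set.Ioi 0) + ν (Set.Ioi (1/(n+1) : ℝ) ∩ Set.Ioi 0) := by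
      refine le_trans (measure_union_le _ _) ?_
      rw [Measure.restrict_apply measurableSet_Iic, Measure.restrict_apply measurableSet_Ioi]
    have h2 : ν (Set.Iic 0 ∩ Set.Ioi 0) = 0 := by
      rw [Set.Iic_inter_Ioi, Set.Ioc_self]; exact measure_empty
    have h3 : ν (Set.Ioi (1/(n+1) : ℝ) ∩ Set.Ioi 0) ≠ ⊤ := by
      refine ne_top_of_le_ne_top (levy_tail_ne_top hν (show (0:ℝ) < 1/(n+1) by positivity)) (measure_mono ?_)
      exact Set.inter_subset_left
    calc (ν.restrict (Set.Ioi 0)) (Set.Iic 0 ∪ Set.Ioi (1/(n+1) : ℝ))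
        ≤ ν (Set.Iic 0 ∩ Set.Ioi 0) + ν (Set.Ioi (1/(n+1) : ℝ) ∩ Set.Ioi 0) := h1
      _ < ⊤ := by rw [h2, zero_add]; exact h3.lt_top
  · refine Set.eq_univ_of_forall fun x => ?_
    rcases le_or_gt x 0 with hx | hx
    · exact Set.mem_iUnion.mpr ⟨0, Or.inl hx⟩
    · obtain ⟨n, hn⟩ := exists_nat_one_div_lt hx
      exact Set.mem_iUnion.mpr ⟨n, Or.inr hn⟩

lemma levy_layercake {ν : Measure ℝ} (hν : IsLevyMeasure ν) :
    ∫⁻ x in Set.Ioc (0:ℝ) 1, ν (Set.Ioi x) ∂volume ≠ ⊤ := by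
  haveI := levy_sigmaFinite hν
  set ν' := ν.restrict (Set.Ioi 0) with hν'
  have hres : ∀ x ∈ Set.Ioc (0:ℝ) 1, ν (Set.Ioi x) = ν' (Set.Ioi x) := by
    intro x hx
    rw [hν', Measure.restrict_apply measurableSet_Ioi,
      Set.inter_eq_left.mpr (Set.Ioi_subset_Ioi hx.1.le)]
  have hrw : ∫⁻ x in Set.Ioc (0:ℝ) 1, ν (Set.Ioi x) ∂volume
      = ∫⁻ x in Set.Ioc (0:ℝ) 1, ∫⁻ z, Set.indicator {p : ℝ × ℝ | p.1 < p.2}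
          (fun _ => (1:ℝ≥0∞)) (x, z) ∂ν' ∂volume := by
    refine MeasureTheory.setLIntegral_congr_fun measurableSet_Ioc
      (fun x hx => ?_)
    rw [hres x hx]
    have : ∀ z, Set.indicator {p : ℝ × ℝ | p.1 < p.2} (fun _ => (1:ℝ≥0∞)) (x, z)
        = Set.indicator (Set.Ioi x) (fun _ => (1:ℝ≥0∞)) z := by
      intro z; by_cases h : x < z <;> simp [Set.indicator, h, Set.mem_Ioi]
    simp_rw [this]
    rw [MeasureTheory.lintegral_indicator measurableSet_Ioi]
    simp
  rw [hrw]
  have hmeas : AEMeasurable (Function.uncurry fun x z =>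
      Set.indicator {p : ℝ × ℝ | p.1 < p.2} (fun _ => (1:ℝ≥0∞)) (x, z))
      ((volume.restrict (Set.Ioc (0:ℝ) 1)).prod ν') := by
    refine Measurable.aemeasurable ?_
    have : (Function.uncurry fun x z =>
        Set.indicator {p : ℝ × ℝ | p.1 < p.2} (fun _ => (1:ℝ≥0∞)) (x, z))
        = Set.indicator {p : ℝ × ℝ | p.1 < p.2} (fun _ => (1:ℝ≥0∞)) := by
      funext p; rfl
    rw [this]
    exact (measurable_const).indicator (measurableSet_lt measurable_fst measurable_snd)
  rw [MeasureTheory.lintegral_lintegral_swap hmeas]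
  have hinner : ∀ z : ℝ, (∫⁻ x in Set.Ioc (0:ℝ) 1, Set.indicator {p : ℝ × ℝ | p.1 < p.2}
      (fun _ => (1:ℝ≥0∞)) (x, z) ∂volume) ≤ ENNReal.ofReal (min z 1) := by
    intro z
    have hind : ∀ x, Set.indicator {p : ℝ × ℝ | p.1 < p.2} (fun _ => (1:ℝ≥0∞)) (x, z)
        = Set.indicator (Set.Iio z) (fun _ => (1:ℝ≥0∞)) x := by
      intro x; by_cases h : x < z <;> simp [Set.indicator, h, Set.mem_Iio]
    simp_rw [hind]
    rw [MeasureTheory.lintegral_indicator measurableSet_Iio]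
    simp only [MeasureTheory.lintegral_one, Measure.restrict_restrict measurableSet_Iio,
      Measure.restrict_apply_univ]
    have hsub : Set.Iio z ∩ Set.Ioc (0:ℝ) 1 ⊆ Set.Ioc 0 (min z 1) := by
      intro x hx
      exact ⟨hx.2.1, le_min hx.1.le hx.2.2⟩
    calc volume (Set.Iio z ∩ Set.Ioc (0:ℝ) 1) ≤ volume (Set.Ioc (0:ℝ) (min z 1)) :=
          measure_mono hsub
      _ = ENNReal.ofReal (min z 1 - 0) := Real.volume_Ioc
      _ = ENNReal.ofReal (min z 1) := by rw [sub_zero]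
  refine ne_top_of_le_ne_top hν.2 ?_
  calc ∫⁻ z, (∫⁻ x in Set.Ioc (0:ℝ) 1, Set.indicator {p : ℝ × ℝ | p.1 < p.2}
        (fun _ => (1:ℝ≥0∞)) (x, z) ∂volume) ∂ν'
      ≤ ∫⁻ z, ENNReal.ofReal (min z 1) ∂ν' := MeasureTheory.lintegral_mono hinner
    _ = ∫⁻ z in Set.Ioi (0:ℝ), ENNReal.ofReal (min z 1) ∂ν := rfl

lemma nubar_integrableOn_Ioc01 {ν : Measure ℝ} (hν : IsLevyMeasure ν) :
    IntegrableOn (nubar ν) (Set.Ioc (0:ℝ) 1) volume := by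
  constructor
  · exact (nubar_measurable ν).aestronglyMeasurable
  · rw [MeasureTheory.hasFiniteIntegral_iff_norm]
    have hb : ∀ x : ℝ, ENNReal.ofReal ‖nubar ν x‖ ≤ ν (Set.Ioi x) := by
      intro x
      rw [Real.norm_of_nonneg (nubar_nonneg ν x)]
      exact ENNReal.ofReal_toReal_le
    refine lt_of_le_of_lt (MeasureTheory.lintegral_mono fun x => hb x) ?_
    exact (levy_layercake hν).lt_top

lemma nubar_intervalIntegrable {ν : Measure ℝ} (hν : IsLevyMeasure ν) {c : ℝ} (hc : 0 ≤ c) :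
    IntervalIntegrable (nubar ν) volume 0 c := by
  rw [intervalIntegrable_iff, Set.uIoc_of_le hc]
  rcases le_or_gt c 1 with h1 | h1
  · exact (nubar_integrableOn_Ioc01 hν).mono_set (Set.Ioc_subset_Ioc le_rfl h1)
  · have h2 : IntegrableOn (nubar ν) (Set.Ioc (1:ℝ) c) volume := by
      refine MeasureTheory.Integrable.mono' (g := fun _ => nubar ν 1)
        ((integrableOn_const_iff (C := nubar ν 1)).mpr (Or.inr ?_))
        ((nubar_measurable ν).aestronglyMeasurable) ?_
      · rw [Real.volume_Ioc]; exact ENNReal.ofReal_lt_top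
      · refine (MeasureTheory.ae_restrict_iff' measurableSet_Ioc).mpr
          (Filter.Eventually.of_forall fun x hx => ?_)
        rw [Real.norm_of_nonneg (nubar_nonneg ν x)]
        exact nubar_anti hν one_pos hx.1.le
    have : Set.Ioc (0:ℝ) c = Set.Ioc 0 1 ∪ Set.Ioc 1 c := (Set.Ioc_union_Ioc_eq_Ioc
      (by norm_num) h1.le).symm
    rw [this]
    exact (nubar_integrableOn_Ioc01 hν).union h2

lemma nubar_intervalIntegrable' {ν : Measure ℝ} (hν : IsLevyMeasure ν) {u v : ℝ}
    (hu : 0 ≤ u) (hv : 0 ≤ v) : IntervalIntegrable (nubar ν) volume u v := by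
  have h1 := nubar_intervalIntegrable hν hu
  have h2 := nubar_intervalIntegrable hν hv
  exact h1.symm.trans h2

lemma K_small {ν : Measure ℝ} (hν : IsLevyMeasure ν) {ε r₀ : ℝ} (hε : 0 < ε) (hr₀ : 0 < r₀) :
    ∃ r : ℝ, 0 < r ∧ r ≤ r₀ ∧ ∫ x in (0:ℝ)..r, nubar ν x ≤ ε := by
  set k := nubar ν with hk
  set rn : ℕ → ℝ := fun n => r₀ / (n + 1) with hrn
  have hrnpos : ∀ n, 0 < rn n := fun n => by positivity
  have hrnle : ∀ n, rn n ≤ r₀ := by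
    intro n
    rw [hrn]
    rw [div_le_iff₀ (by positivity)]
    nlinarith [Nat.cast_nonneg (α := ℝ) n, hr₀]
  have hdom : Integrable (Set.indicator (Set.Ioc 0 r₀) k) volume := by
    rw [MeasureTheory.integrable_indicator_iff measurableSet_Ioc]
    have := nubar_intervalIntegrable hν hr₀.le
    rwa [intervalIntegrable_iff, Set.uIoc_of_le hr₀.le] at this
  have hconv : Filter.Tendsto (fun n => ∫ x, Set.indicator (Set.Ioc 0 (rn n)) k x) Filter.atTop
      (nhds (∫ _x : ℝ, (0:ℝ))) := by
    refine MeasureTheory.tendsto_integral_of_dominated_convergence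
      (Set.indicator (Set.Ioc 0 r₀) k) ?_ hdom ?_ ?_
    · intro n
      exact ((nubar_measurable ν).indicator measurableSet_Ioc).aestronglyMeasurable
    · intro n
      refine Filter.Eventually.of_forall fun x => ?_
      by_cases hx : x ∈ Set.Ioc 0 (rn n)
      · have hx' : x ∈ Set.Ioc 0 r₀ := ⟨hx.1, hx.2.trans (hrnle n)⟩
        rw [Set.indicator_of_mem hx, Set.indicator_of_mem hx',
          Real.norm_of_nonneg (nubar_nonneg ν x)]
      · rw [Set.indicator_of_notMem hx, norm_zero]
        exact Set.indicator_apply_nonneg fun _ => nubar_nonneg ν x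
    · refine Filter.Eventually.of_forall fun x => ?_
      rcases le_or_gt x 0 with hx | hx
      · have heq : ∀ n, Set.indicator (Set.Ioc 0 (rn n)) k x = 0 := by
          intro n
          exact Set.indicator_of_notMem (fun h => absurd h.1 (not_lt.mpr hx)) _
        simp_rw [heq]; exact tendsto_const_nhds
      · obtain ⟨N, hN⟩ := exists_nat_one_div_lt (show (0:ℝ) < x / r₀ by positivity)
        refine tendsto_const_nhds.congr' ?_
        rw [Filter.EventuallyEq, Filter.eventually_atTop]
        refine ⟨N, fun n hn => ?_⟩
        have hlt : rn n < x := by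
          have h1 : rn n ≤ rn N := by
            rw [hrn]
            apply div_le_div_of_nonneg_left hr₀.le (by positivity)
            exact_mod_cast Nat.succ_le_succ hn
          have h2 : rn N < x := by
            have hrw : rn N = r₀ * (1/(N+1)) := by rw [hrn]; ring
            rw [hrw]
            calc r₀ * (1/(N+1:ℝ)) < r₀ * (x/r₀) := mul_lt_mul_of_pos_left hN hr₀
              _ = x := by field_simp
          exact lt_of_le_of_lt h1 h2
        exact (Set.indicator_of_notMem (fun h => absurd h.2 (not_le.mpr hlt)) _).symm
  rw [MeasureTheory.integral_zero] at hconv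
  obtain ⟨n, hn⟩ := (hconv.eventually_lt_const hε).exists
  refine ⟨rn n, hrnpos n, hrnle n, ?_⟩
  have : ∫ x in (0:ℝ)..(rn n), k x = ∫ x, Set.indicator (Set.Ioc 0 (rn n)) k x := by
    rw [intervalIntegral.integral_of_le (hrnpos n).le,
      MeasureTheory.integral_indicator measurableSet_Ioc]
  rw [hk] at this
  rw [this]
  exact hn.le

lemma nubar_refl_intervalIntegrable {ν : Measure ℝ} (hν : IsLevyMeasure ν) {u v c : ℝ}
    (hu : 0 ≤ u) (huv : u ≤ v) (hvc : v ≤ c) :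
    IntervalIntegrable (fun s => nubar ν (c - s)) volume u v := by
  have h1 : IntervalIntegrable (nubar ν) volume (c - v) (c - u) :=
    nubar_intervalIntegrable' hν (by linarith) (by linarith)
  have h2 := h1.comp_sub_left c
  rw [sub_sub_cancel, sub_sub_cancel] at h2
  exact h2.symm

lemma nubar_refl_mul_intervalIntegrable {ν : Measure ℝ} (hν : IsLevyMeasure ν) {u v c : ℝ}
    (hu : 0 ≤ u) (huv : u ≤ v) (hvc : v ≤ c) {ϑ : ℝ → ℝ} (hϑ : Continuous ϑ) :
    IntervalIntegrable (fun s => nubar ν (c - s) * ϑ s) volume u v := by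
  rw [intervalIntegrable_iff, Set.uIoc_of_le huv]
  obtain ⟨C, hC⟩ := (isCompact_Icc (a := u) (b := v)).exists_bound_of_continuousOn
    hϑ.continuousOn
  have hker : IntegrableOn (fun s => nubar ν (c - s)) (Set.Ioc u v) volume := by
    have := nubar_refl_intervalIntegrable hν hu huv hvc
    rwa [intervalIntegrable_iff, Set.uIoc_of_le huv] at this
  refine MeasureTheory.Integrable.mono' (hker.const_mul C) ?_ ?_
  · exact (((nubar_measurable ν).comp (measurable_const.sub measurable_id)).mul
      hϑ.measurable).aestronglyMeasurable
  · refine (MeasureTheory.ae_restrict_iff' measurableSet_Ioc).mpr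
      (Filter.Eventually.of_forall fun s hs => ?_)
    have hs' : s ∈ Set.Icc u v := ⟨hs.1.le, hs.2⟩
    rw [norm_mul, Real.norm_of_nonneg (nubar_nonneg ν _)]
    calc nubar ν (c - s) * ‖ϑ s‖ ≤ nubar ν (c - s) * C :=
          mul_le_mul_of_nonneg_left (hC s hs') (nubar_nonneg ν _)
      _ = C * nubar ν (c - s) := mul_comm _ _

lemma fubini_avg {ν : Measure ℝ} (hν : IsLevyMeasure ν) {F : ℝ → ℝ} (hF : Continuous F)
    (hF0 : ∀ x ≤ 0, F x = 0) {C₀ : ℝ} (hC₀ : 0 ≤ C₀) (hFb : ∀ x, |F x| ≤ C₀)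
    {h t : ℝ} (hh : 0 < h) (hht : h < t) :
    ∫ σ in (0:ℝ)..h, (∫ s in (0:ℝ)..(t - σ), nubar ν (t - σ - s) * F s) =
      ∫ w in (0:ℝ)..t, nubar ν (t - w) * (∫ σ in (0:ℝ)..h, F (w - σ)) := by
  have ht0 : (0:ℝ) < t := hh.trans hht
  set k := nubar ν with hk
  have hstepa : ∀ σ ∈ Set.Icc (0:ℝ) h,
      (∫ s in (0:ℝ)..(t - σ), k (t - σ - s) * F s) =
        ∫ w in (0:ℝ)..t, k (t - w) * F (w - σ) := by
    intro σ hσ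
    have hσt : σ ≤ t := hσ.2.trans hht.le
    have e1 : (∫ s in (0:ℝ)..(t - σ), k (t - σ - s) * F s) =
        ∫ w in σ..t, k (t - w) * F (w - σ) := by
      have h2 := intervalIntegral.integral_comp_add_right (a := (0:ℝ)) (b := t - σ)
        (fun w => k (t - w) * F (w - σ)) σ
      rw [zero_add, sub_add_cancel] at h2
      rw [← h2]
      refine intervalIntegral.integral_congr fun s hs => ?_
      have harg : t - (s + σ) = t - σ - s := by ring
      rw [harg, add_sub_cancel_right]
    have hi1 : IntervalIntegrable (fun w => k (t - w) * F (w - σ)) volume 0 σ :=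
      nubar_refl_mul_intervalIntegrable hν le_rfl hσ.1 hσt
        (hF.comp (continuous_id.sub continuous_const))
    have hi2 : IntervalIntegrable (fun w => k (t - w) * F (w - σ)) volume σ t :=
      nubar_refl_mul_intervalIntegrable hν hσ.1 hσt le_rfl
        (hF.comp (continuous_id.sub continuous_const))
    have e0 : (∫ w in (0:ℝ)..σ, k (t - w) * F (w - σ)) = 0 := by
      have heq : Set.EqOn (fun w => k (t - w) * F (w - σ)) (fun _ => (0:ℝ))
          (Set.uIcc 0 σ) := by
        intro w hw
        rw [Set.uIcc_of_le hσ.1] at hw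
        have : F (w - σ) = 0 := hF0 _ (by linarith [hw.2])
        simp [this]
      rw [intervalIntegral.integral_congr heq, intervalIntegral.integral_zero]
    rw [e1, ← intervalIntegral.integral_add_adjacent_intervals hi1 hi2, e0, zero_add]
  -- convert to set integrals
  rw [intervalIntegral.integral_of_le hh.le, intervalIntegral.integral_of_le ht0.le]
  have hstepa' : ∀ σ ∈ Set.Ioc (0:ℝ) h,
      (∫ s in (0:ℝ)..(t - σ), k (t - σ - s) * F s) =
        ∫ w in Set.Ioc (0:ℝ) t, k (t - w) * F (w - σ) ∂volume := by
    intro σ hσ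
    rw [hstepa σ ⟨hσ.1.le, hσ.2⟩, intervalIntegral.integral_of_le ht0.le]
  rw [MeasureTheory.setIntegral_congr_fun measurableSet_Ioc hstepa']
  have hswap := MeasureTheory.integral_integral_swap
    (μ := volume.restrict (Set.Ioc (0:ℝ) h)) (ν := volume.restrict (Set.Ioc (0:ℝ) t))
    (f := fun σ w => k (t - w) * F (w - σ)) ?_
  · rw [hswap]
    refine MeasureTheory.setIntegral_congr_fun measurableSet_Ioc fun w hw => ?_
    rw [intervalIntegral.integral_of_le hh.le]
    exact MeasureTheory.integral_const_mul _ _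
  · -- integrability on the product
    obtain ⟨hker⟩ : Nonempty (IntegrableOn (fun w => k (t - w)) (Set.Ioc (0:ℝ) t) volume) := by
      refine ⟨?_⟩
      have := nubar_refl_intervalIntegrable hν le_rfl ht0.le (le_refl t)
      rwa [intervalIntegrable_iff, Set.uIoc_of_le ht0.le] at this
    refine MeasureTheory.Integrable.mono'
      (MeasureTheory.Integrable.mul_prod (MeasureTheory.integrable_const C₀) hker) ?_ ?_
    · exact (((nubar_measurable ν).comp (measurable_const.sub measurable_snd)).mul
        (hF.measurable.comp (measurable_snd.sub measurable_fst))).aestronglyMeasurable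
    · refine Filter.Eventually.of_forall fun p => ?_
      rw [Function.uncurry_apply_pair, norm_mul, Real.norm_of_nonneg (nubar_nonneg ν _)]
      calc k (t - p.2) * ‖F (p.2 - p.1)‖ ≤ k (t - p.2) * C₀ := by
            refine mul_le_mul_of_nonneg_left ?_ (nubar_nonneg ν _)
            rw [Real.norm_eq_abs]; exact hFb _
        _ = C₀ * k (t - p.2) := mul_comm _ _


set_option maxHeartbeats 1000000

/-- let `f` be continuous on `[0,T]`, `t₀ > 0` the smallest maximum point of
`f` on `[0,T]`, and suppose the non-local derivative `∂ₜ^Φ f`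
(the derivative `D` of `t ↦ ∫_0^t ν̄(t-s)(f(s)-f(0)) ds`) is well-defined and continuous
on an open interval `(a,b) ⊆ (0,T)` containing `t₀`. Then `∂ₜ^Φ f (t₀) ≥ 0`. -/
theorem stmt_3 (ν : Measure ℝ) (hν : IsLevyMeasure ν)
    (T : ℝ) (hT : 0 < T) (f : ℝ → ℝ)
    (hfcont : ContinuousOn f (Set.Icc 0 T))
    (t₀ : ℝ) (ht₀mem : t₀ ∈ Set.Icc (0:ℝ) T) (ht₀pos : 0 < t₀)
    (hmax : ∀ t ∈ Set.Icc (0:ℝ) T, f t ≤ f t₀)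
    (hfirst : ∀ t ∈ Set.Icc (0:ℝ) T, f t = f t₀ → t₀ ≤ t)
    (a b : ℝ) (hI : Set.Ioo a b ⊆ Set.Ioo 0 T) (ht₀I : t₀ ∈ Set.Ioo a b)
    (D : ℝ → ℝ)
    (hD : ∀ t ∈ Set.Ioo a b,
      HasDerivAt (fun τ => ∫ s in (0:ℝ)..τ, nubar ν (τ - s) * (f s - f 0)) (D t) t)
    (hDcont : ContinuousOn D (Set.Ioo a b)) :
    0 ≤ D t₀ := by
  obtain ⟨ht₀0, ht₀T⟩ := ht₀mem
  obtain ⟨hat₀, ht₀b⟩ := ht₀I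
  -- clamped version of f
  set fc : ℝ → ℝ := fun x => f (max 0 (min x T)) with hfcdef
  have hclamp_mem : ∀ x : ℝ, max 0 (min x T) ∈ Set.Icc (0:ℝ) T := fun x =>
    ⟨le_max_left _ _, max_le hT.le (min_le_right _ _)⟩
  have hfc_cont : Continuous fc := by
    refine hfcont.comp_continuous ?_ hclamp_mem
    exact continuous_const.max (continuous_id.min continuous_const)
  have hfc_eq : ∀ x ∈ Set.Icc (0:ℝ) T, fc x = f x := by
    intro x hx
    rw [hfcdef]
    simp only [min_eq_left hx.2, max_eq_right hx.1]
  have hfc0 : ∀ x : ℝ, x ≤ 0 → fc x = f 0 := by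
    intro x hx
    rw [hfcdef]
    simp only [min_eq_left (le_trans hx hT.le), max_eq_left hx]
  set F : ℝ → ℝ := fun x => fc x - f 0 with hFdef
  have hFcont : Continuous F := hfc_cont.sub continuous_const
  have hF0 : ∀ x ≤ 0, F x = 0 := by
    intro x hx
    rw [hFdef]
    simp only [hfc0 x hx, sub_self]
  obtain ⟨C₁, hC₁⟩ := (isCompact_Icc (a := (0:ℝ)) (b := T)).exists_bound_of_continuousOn hfcont
  set C₀ : ℝ := |C₁| + |f 0| + 1 with hC₀def
  have hC₀pos : 0 < C₀ := by positivity
  have hFb : ∀ x, |F x| ≤ C₀ := by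
    intro x
    have h1 : |fc x| ≤ |C₁| := by
      have := hC₁ _ (hclamp_mem x)
      rw [Real.norm_eq_abs] at this
      exact le_trans this (le_abs_self C₁)
    calc |F x| ≤ |fc x| + |f 0| := abs_sub _ _
      _ ≤ C₀ := by rw [hC₀def]; linarith
  set k := nubar ν with hkdef
  set g : ℝ → ℝ := fun x => ∫ s in (0:ℝ)..x, k (x - s) * F s with hgdef
  have hg : ∀ t ∈ Set.Ioo a b, HasDerivAt g (D t) t := by
    intro t ht
    have hmem : Set.Ioo (0:ℝ) T ∈ nhds t := isOpen_Ioo.mem_nhds (hI ht)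
    refine HasDerivAt.congr_of_eventuallyEq (hD t ht) ?_
    refine Filter.eventuallyEq_of_mem hmem fun τ hτ => ?_
    rw [hgdef]
    refine intervalIntegral.integral_congr fun s hs => ?_
    rw [Set.uIcc_of_le hτ.1.le] at hs
    have hsT : s ∈ Set.Icc (0:ℝ) T := ⟨hs.1, le_trans hs.2 hτ.2.le⟩
    rw [hFdef]
    simp only [hfc_eq s hsT]
  by_contra hcon
  push_neg at hcon
  set c := D t₀ with hcdef
  have hcneg : c < 0 := hcon
  set ε' : ℝ := -c / 4 with hε'def
  have hε'pos : 0 < ε' := by rw [hε'def]; linarith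
  -- continuity of D at t₀
  have hDct : ContinuousWithinAt D (Set.Ioo a b) t₀ := hDcont t₀ ⟨hat₀, ht₀b⟩
  rw [Metric.continuousWithinAt_iff] at hDct
  obtain ⟨δ, hδpos, hδ⟩ := hDct ε' hε'pos
  set δ₂ : ℝ := min (δ/2) (min ((t₀ - a)/2) (t₀/2)) with hδ₂def
  have hδ₂pos : 0 < δ₂ := by
    rw [hδ₂def]
    refine lt_min (by linarith) (lt_min (by linarith) (by linarith))
  have hδ₂δ : δ₂ < δ := by
    calc δ₂ ≤ δ/2 := min_le_left _ _
      _ < δ := by linarith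
  have hδ₂a : δ₂ < t₀ - a := by
    calc δ₂ ≤ (t₀ - a)/2 := le_trans (min_le_right _ _) (min_le_left _ _)
      _ < t₀ - a := by linarith
  have hδ₂t : δ₂ ≤ t₀/2 := le_trans (min_le_right _ _) (min_le_right _ _)
  have hwin : ∀ x ∈ Set.Icc (t₀ - δ₂) t₀, x ∈ Set.Ioo a b ∧ |D x - c| < ε' := by
    intro x hx
    have hx1 : a < x := by linarith [hx.1]
    have hx2 : x < b := lt_of_le_of_lt hx.2 ht₀b
    refine ⟨⟨hx1, hx2⟩, ?_⟩
    have hdist : dist x t₀ < δ := by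
      rw [Real.dist_eq]
      have h1 : |x - t₀| ≤ δ₂ := by
        rw [abs_le]; constructor <;> [linarith [hx.1]; linarith [hx.2]]
      linarith
    have := hδ ⟨hx1, hx2⟩ hdist
    rwa [Real.dist_eq] at this
  -- strict first maximum for F
  have hstrict : ∀ s, 0 ≤ s → s < t₀ → F s < F t₀ := by
    intro s h0s hst
    have hsT : s ∈ Set.Icc (0:ℝ) T := ⟨h0s, le_trans hst.le ht₀T⟩
    have h1 : f s ≤ f t₀ := hmax s hsT
    have h2 : f s ≠ f t₀ := fun he => absurd (hfirst s hsT he) (not_le.mpr hst)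
    have h3 : f s < f t₀ := lt_of_le_of_ne h1 h2
    rw [hFdef]
    simp only [hfc_eq s hsT, hfc_eq t₀ ⟨ht₀0, ht₀T⟩]
    linarith
  set Fint : ℝ → ℝ := fun x => ∫ u in (0:ℝ)..x, F u with hFintdef
  have hFintlip : ∀ x y : ℝ, |Fint x - Fint y| ≤ C₀ * |x - y| := by
    intro x y
    rw [hFintdef]
    simp only []
    rw [intervalIntegral.integral_interval_sub_left (hFcont.intervalIntegrable _ _)
      (hFcont.intervalIntegrable _ _)]
    have hb := intervalIntegral.norm_integral_le_of_norm_le_const (C := C₀) (f := F)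
      (a := y) (b := x) (fun u _ => by rw [Real.norm_eq_abs]; exact hFb u)
    rwa [Real.norm_eq_abs] at hb
  have hFintcont : Continuous Fint := by
    rw [hFintdef]
    exact intervalIntegral.continuous_primitive (fun a b => hFcont.intervalIntegrable a b) 0
  set δ₃ : ℝ := δ₂ / 2 with hδ₃def
  have hδ₃pos : 0 < δ₃ := by rw [hδ₃def]; linarith
  have h03 : 0 ≤ t₀ - δ₃ := by rw [hδ₃def]; linarith [hδ₂t, ht₀pos]
  obtain ⟨sm, hsm_mem, hsm_max⟩ := (isCompact_Icc (a := (0:ℝ)) (b := t₀ - δ₃)).exists_isMaxOn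
    (Set.nonempty_Icc.mpr h03) hFcont.continuousOn
  set M : ℝ := F t₀ with hMdef
  set M₂ : ℝ := max (F sm) 0 with hM₂def
  have hM₂M : M₂ < M := by
    refine max_lt ?_ ?_
    · exact hstrict sm hsm_mem.1 (lt_of_le_of_lt hsm_mem.2 (by linarith))
    · have h1 := hstrict 0 le_rfl ht₀pos
      rw [hF0 0 le_rfl] at h1
      exact h1
  set ε₁ : ℝ := (M - M₂) / 2 with hε₁def
  have hε₁pos : 0 < ε₁ := by rw [hε₁def]; exact half_pos (sub_pos.mpr hM₂M)
  obtain ⟨h₀, hh₀pos, hh₀⟩ : ∃ h₀ > 0, ∀ x, |x - t₀| ≤ h₀ → M - ε₁ ≤ F x := by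
    have hcF := Metric.continuousAt_iff.mp (hFcont.continuousAt (x := t₀)) ε₁ hε₁pos
    obtain ⟨d, hdpos, hd⟩ := hcF
    refine ⟨d/2, by positivity, fun x hx => ?_⟩
    have h1 : dist x t₀ < d := by rw [Real.dist_eq]; linarith
    have h2 := hd h1
    rw [Real.dist_eq] at h2
    have h3 := abs_lt.mp h2
    rw [hMdef]
    linarith [h3.1]
  set h : ℝ := min h₀ (δ₂/4) with hhdef
  have hhpos : 0 < h := by rw [hhdef]; exact lt_min hh₀pos (by linarith)
  have hh4 : h ≤ δ₂/4 := min_le_right _ _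
  have hhh₀ : h ≤ h₀ := min_le_left _ _
  set Φ : ℝ → ℝ := fun w => ∫ σ in (0:ℝ)..h, F (w - σ) with hΦdef
  have hΦrepr : ∀ w, Φ w = Fint w - Fint (w - h) := by
    intro w
    rw [hΦdef]
    simp only []
    rw [intervalIntegral.integral_comp_sub_left F w, sub_zero, hFintdef]
    simp only []
    rw [intervalIntegral.integral_interval_sub_left (hFcont.intervalIntegrable _ _)
      (hFcont.intervalIntegrable _ _)]
  have hΦcont : Continuous Φ := by
    have : Φ = fun w => Fint w - Fint (w - h) := funext hΦrepr
    rw [this]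
    exact hFintcont.sub (hFintcont.comp (continuous_id.sub continuous_const))
  obtain ⟨τ, hτmem, hτmax⟩ := (isCompact_Icc (a := (0:ℝ)) (b := t₀)).exists_isMaxOn
    (Set.nonempty_Icc.mpr ht₀0) hΦcont.continuousOn
  have hΦt₀ : h * (M - ε₁) ≤ Φ t₀ := by
    have hpt : ∀ σ ∈ Set.Icc (0:ℝ) h, M - ε₁ ≤ F (t₀ - σ) := by
      intro σ hσ
      refine hh₀ _ ?_
      have : |t₀ - σ - t₀| = σ := by rw [abs_of_nonpos (by linarith [hσ.1])]; ring
      rw [this]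
      exact le_trans hσ.2 hhh₀
    calc h * (M - ε₁) = ∫ _σ in (0:ℝ)..h, (M - ε₁) := by
          rw [intervalIntegral.integral_const, smul_eq_mul, sub_zero]
      _ ≤ Φ t₀ := by
          refine intervalIntegral.integral_mono_on hhpos.le intervalIntegrable_const
            ((hFcont.comp (continuous_const.sub continuous_id)).intervalIntegrable _ _) hpt
  have hΦsmall : ∀ w ∈ Set.Icc (0:ℝ) (t₀ - δ₃), Φ w ≤ h * M₂ := by
    intro w hw
    have hFle : ∀ σ ∈ Set.Icc (0:ℝ) h, F (w - σ) ≤ M₂ := by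
      intro σ hσ
      rcases le_or_gt (w - σ) 0 with hws | hws
      · rw [hF0 _ hws]; exact le_max_right _ _
      · have hmem2 : w - σ ∈ Set.Icc (0:ℝ) (t₀ - δ₃) := ⟨hws.le, by linarith [hσ.1, hw.2]⟩
        exact le_trans (hsm_max hmem2) (le_max_left _ _)
    calc Φ w ≤ ∫ _σ in (0:ℝ)..h, M₂ := by
          refine intervalIntegral.integral_mono_on hhpos.le
            ((hFcont.comp (continuous_const.sub continuous_id)).intervalIntegrable _ _)
            intervalIntegrable_const hFle
      _ = h * M₂ := by rw [intervalIntegral.integral_const, smul_eq_mul, sub_zero]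
  have hτgt : t₀ - δ₃ < τ := by
    by_contra hle
    push_neg at hle
    have h1 : Φ τ ≤ h * M₂ := hΦsmall τ ⟨hτmem.1, hle⟩
    have h2 : Φ t₀ ≤ Φ τ := hτmax ⟨ht₀0, le_rfl⟩
    have h3 : M₂ < M - ε₁ := by rw [hε₁def]; linarith
    have h4 : h * M₂ < h * (M - ε₁) := mul_lt_mul_of_pos_left h3 hhpos
    linarith only [h1, h2, hΦt₀, h4]
  have hτle : τ ≤ t₀ := hτmem.2
  set Λ : ℝ := Φ τ with hΛdef
  have hΛ0 : 0 ≤ Λ := by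
    have h1 : Φ 0 = 0 := by
      rw [hΦdef]
      simp only []
      have heq : Set.EqOn (fun σ => F (0 - σ)) (fun _ => (0:ℝ)) (Set.uIcc 0 h) := by
        intro σ hσ
        rw [Set.uIcc_of_le hhpos.le] at hσ
        exact hF0 _ (by linarith [hσ.1])
      rw [intervalIntegral.integral_congr heq, intervalIntegral.integral_zero]
    rw [hΛdef, ← h1]
    exact hτmax ⟨le_rfl, ht₀0⟩
  have hΦleΛ : ∀ s ∈ Set.Icc (0:ℝ) t₀, Φ s ≤ Λ := fun s hs => hτmax hs
  have hΛlip : ∀ s, s ≤ τ → Λ - Φ s ≤ 2 * C₀ * (τ - s) := by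
    intro s hsτ
    rw [hΛdef, hΦrepr, hΦrepr]
    have l1 := abs_le.mp (hFintlip τ s)
    have l2 := abs_le.mp (hFintlip (τ - h) (s - h))
    have e1 : |τ - s| = τ - s := abs_of_nonneg (by linarith)
    have e2 : |τ - h - (s - h)| = τ - s := by
      rw [show τ - h - (s - h) = τ - s by ring]; exact abs_of_nonneg (by linarith)
    rw [e1] at l1
    rw [e2] at l2
    linarith [l1.2, l2.1]
  obtain ⟨r, hrpos, hrδ, hKr⟩ := K_small hν (show 0 < ε' * h / (2 * C₀ + 1) by positivity)
    (show 0 < δ₂/4 by linarith)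
  -- geometry
  have hτlb : t₀ - δ₂/2 < τ := by rw [hδ₃def] at hτgt; exact hτgt
  have hgeo1 : 0 < τ - r - h := by
    have h1 : t₀ - δ₂ ≥ t₀/2 := by linarith [hδ₂t]
    linarith [hτlb, hh4, hrδ, ht₀pos]
  have hwinsub : ∀ σ ∈ Set.Icc (0:ℝ) h, ∀ x ∈ Set.Icc (τ - r - σ) (τ - σ),
      x ∈ Set.Icc (t₀ - δ₂) t₀ := by
    intro σ hσ x hx
    constructor
    · have := hx.1
      have hσh := hσ.2
      linarith [hτlb, hh4, hrδ]
    · have := hx.2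
      linarith [hσ.1, hτle]
  -- Fubini identities
  have hA : (∫ σ in (0:ℝ)..h, g (τ - σ)) = ∫ w in (0:ℝ)..τ, k (τ - w) * Φ w :=
    fubini_avg hν hFcont hF0 hC₀pos.le hFb hhpos (by linarith [hgeo1, hrpos])
  have hB : (∫ σ in (0:ℝ)..h, g ((τ - r) - σ)) =
      ∫ w in (0:ℝ)..(τ - r), k ((τ - r) - w) * Φ w :=
    fubini_avg hν hFcont hF0 hC₀pos.le hFb hhpos (by linarith [hgeo1])
  -- lower bound for A - B
  have h0τr : (0:ℝ) ≤ τ - r := by linarith [hgeo1, hhpos]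
  have hτrτ : τ - r ≤ τ := by linarith [hrpos]
  have hIA1 : IntervalIntegrable (fun w => k (τ - w) * Φ w) volume 0 (τ - r) :=
    nubar_refl_mul_intervalIntegrable hν le_rfl h0τr hτrτ hΦcont
  have hIA2 : IntervalIntegrable (fun w => k (τ - w) * Φ w) volume (τ - r) τ :=
    nubar_refl_mul_intervalIntegrable hν h0τr hτrτ le_rfl hΦcont
  have hIB : IntervalIntegrable (fun w => k (τ - r - w) * Φ w) volume 0 (τ - r) :=
    nubar_refl_mul_intervalIntegrable hν le_rfl h0τr le_rfl hΦcont
  have hIJ1 : IntervalIntegrable (fun w => k (τ - w) * Λ) volume 0 (τ - r) :=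
    nubar_refl_mul_intervalIntegrable hν le_rfl h0τr hτrτ continuous_const
  have hIJ2 : IntervalIntegrable (fun w => k (τ - r - w) * Λ) volume 0 (τ - r) :=
    nubar_refl_mul_intervalIntegrable hν le_rfl h0τr le_rfl continuous_const
  have hIJ3 : IntervalIntegrable (fun w => k (τ - w) * (Λ - 2 * C₀ * r)) volume (τ - r) τ :=
    nubar_refl_mul_intervalIntegrable hν h0τr hτrτ le_rfl continuous_const
  have hsplitA : (∫ w in (0:ℝ)..τ, k (τ - w) * Φ w) =
      (∫ w in (0:ℝ)..(τ - r), k (τ - w) * Φ w) + ∫ w in (τ - r)..τ, k (τ - w) * Φ w :=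
    (intervalIntegral.integral_add_adjacent_intervals hIA1 hIA2).symm
  -- step 1
  have hstep1 : (∫ w in (0:ℝ)..(τ - r), k (τ - w) * Λ) -
      (∫ w in (0:ℝ)..(τ - r), k (τ - r - w) * Λ) ≤
      (∫ w in (0:ℝ)..(τ - r), k (τ - w) * Φ w) -
      (∫ w in (0:ℝ)..(τ - r), k (τ - r - w) * Φ w) := by
    rw [← intervalIntegral.integral_sub hIJ1 hIJ2, ← intervalIntegral.integral_sub hIA1 hIB]
    refine intervalIntegral.integral_mono_ae_restrict h0τr (hIJ1.sub hIJ2) (hIA1.sub hIB) ?_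
    have hne : ∀ᵐ w : ℝ ∂(volume.restrict (Set.Icc 0 (τ - r))), w ≠ τ - r := by
      refine MeasureTheory.ae_restrict_of_ae ?_
      rw [MeasureTheory.ae_iff]
      have : {w : ℝ | ¬ w ≠ τ - r} = {τ - r} := by ext w; simp
      rw [this]
      exact measure_singleton _
    have hmem := MeasureTheory.ae_restrict_mem (μ := volume)
      (measurableSet_Icc (a := (0:ℝ)) (b := τ - r))
    filter_upwards [hne, hmem] with w hwne hwmem
    have hwlt : w < τ - r := lt_of_le_of_ne hwmem.2 hwne
    have hk1 : k (τ - w) ≤ k (τ - r - w) := nubar_anti hν (by linarith) (by linarith [hrpos])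
    have hΦw : Φ w ≤ Λ := hΦleΛ w ⟨hwmem.1, by linarith [hτle]⟩
    have hprod : 0 ≤ (k (τ - r - w) - k (τ - w)) * (Λ - Φ w) :=
      mul_nonneg (by linarith) (by linarith)
    have hgoal : 0 ≤ (k (τ - w) * Φ w - k (τ - r - w) * Φ w)
        - (k (τ - w) * Λ - k (τ - r - w) * Λ) := by
      calc (0:ℝ) ≤ (k (τ - r - w) - k (τ - w)) * (Λ - Φ w) := hprod
        _ = (k (τ - w) * Φ w - k (τ - r - w) * Φ w)
            - (k (τ - w) * Λ - k (τ - r - w) * Λ) := by ring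
    linarith only [hgoal]
  -- step 2
  have hstep2 : (Λ - 2 * C₀ * r) * (∫ x in (0:ℝ)..r, k x) ≤
      ∫ w in (τ - r)..τ, k (τ - w) * Φ w := by
    have hmono : (∫ w in (τ - r)..τ, k (τ - w) * (Λ - 2 * C₀ * r)) ≤
        ∫ w in (τ - r)..τ, k (τ - w) * Φ w := by
      refine intervalIntegral.integral_mono_on hτrτ hIJ3 hIA2 ?_
      intro w hw
      have hΛw : Λ - Φ w ≤ 2 * C₀ * r := by
        have h1 := hΛlip w hw.2
        have h2 : 2 * C₀ * (τ - w) ≤ 2 * C₀ * r :=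
          mul_le_mul_of_nonneg_left (by linarith [hw.1]) (by positivity)
        linarith
      exact mul_le_mul_of_nonneg_left (by linarith) (nubar_nonneg ν _)
    have hconst : (∫ w in (τ - r)..τ, k (τ - w) * (Λ - 2 * C₀ * r)) =
        (Λ - 2 * C₀ * r) * ∫ x in (0:ℝ)..r, k x := by
      rw [intervalIntegral.integral_mul_const]
      have hrefl := intervalIntegral.integral_comp_sub_left (a := τ - r) (b := τ) k τ
      rw [sub_self, sub_sub_cancel] at hrefl
      rw [hrefl, mul_comm]
    rw [← hconst]
    exact hmono
  -- step 3 : values of the J integrals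
  have hJ1 : (∫ w in (0:ℝ)..(τ - r), k (τ - w) * Λ) = (∫ x in r..τ, k x) * Λ := by
    rw [intervalIntegral.integral_mul_const]
    have hrefl := intervalIntegral.integral_comp_sub_left (a := (0:ℝ)) (b := τ - r) k τ
    rw [sub_zero, sub_sub_cancel] at hrefl
    rw [hrefl]
  have hJ2 : (∫ w in (0:ℝ)..(τ - r), k (τ - r - w) * Λ) = (∫ x in (0:ℝ)..(τ - r), k x) * Λ := by
    rw [intervalIntegral.integral_mul_const]
    have hrefl := intervalIntegral.integral_comp_sub_left (a := (0:ℝ)) (b := τ - r) k (τ - r)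
    rw [sub_zero, sub_self] at hrefl
    rw [hrefl]
  -- assemble the lower bound: A - B ≥ -(2*C₀*r) * ∫_0^r k
  have hKr0 : 0 ≤ ∫ x in (0:ℝ)..r, k x :=
    intervalIntegral.integral_nonneg hrpos.le (fun x _ => nubar_nonneg ν x)
  have hbracket : (0:ℝ) ≤ (∫ x in r..τ, k x) + (∫ x in (0:ℝ)..r, k x)
      - (∫ x in (0:ℝ)..(τ - r), k x) := by
    have hadj : (∫ x in (0:ℝ)..r, k x) + (∫ x in r..τ, k x) = ∫ x in (0:ℝ)..τ, k x :=
      intervalIntegral.integral_add_adjacent_intervals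
        (nubar_intervalIntegrable' hν le_rfl hrpos.le)
        (nubar_intervalIntegrable' hν hrpos.le (by linarith [hgeo1, hhpos]))
    have hsub : (∫ x in (0:ℝ)..τ, k x) - (∫ x in (0:ℝ)..(τ - r), k x)
        = ∫ x in (τ - r)..τ, k x :=
      intervalIntegral.integral_interval_sub_left
        (nubar_intervalIntegrable' hν le_rfl (by linarith [hgeo1, hhpos]))
        (nubar_intervalIntegrable' hν le_rfl h0τr)
    have hnn : 0 ≤ ∫ x in (τ - r)..τ, k x :=
      intervalIntegral.integral_nonneg hτrτ (fun x _ => nubar_nonneg ν x)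
    linarith
  have hlow : -(2 * C₀ * r) * (∫ x in (0:ℝ)..r, k x) ≤
      (∫ w in (0:ℝ)..τ, k (τ - w) * Φ w) -
      (∫ w in (0:ℝ)..(τ - r), k (τ - r - w) * Φ w) := by
    have e1 : (∫ w in (0:ℝ)..τ, k (τ - w) * Φ w) -
        (∫ w in (0:ℝ)..(τ - r), k (τ - r - w) * Φ w)
        ≥ ((∫ x in r..τ, k x) * Λ - (∫ x in (0:ℝ)..(τ - r), k x) * Λ)
          + (Λ - 2 * C₀ * r) * (∫ x in (0:ℝ)..r, k x) := by
      rw [hsplitA, ← hJ1, ← hJ2]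
      have := hstep1
      have := hstep2
      linarith
    have e2 : ((∫ x in r..τ, k x) * Λ - (∫ x in (0:ℝ)..(τ - r), k x) * Λ)
        + (Λ - 2 * C₀ * r) * (∫ x in (0:ℝ)..r, k x)
        = Λ * ((∫ x in r..τ, k x) + (∫ x in (0:ℝ)..r, k x) - (∫ x in (0:ℝ)..(τ - r), k x))
          - (2 * C₀ * r) * (∫ x in (0:ℝ)..r, k x) := by ring
    have e3 : 0 ≤ Λ * ((∫ x in r..τ, k x) + (∫ x in (0:ℝ)..r, k x)
        - (∫ x in (0:ℝ)..(τ - r), k x)) := mul_nonneg hΛ0 hbracket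
    linarith [e1, e2.symm.le]
  -- upper bound via the derivative
  have hup1 : ∀ σ ∈ Set.Icc (0:ℝ) h, g (τ - σ) - g ((τ - r) - σ) ≤ r * (c + ε') := by
    intro σ hσ
    have hord : (τ - r) - σ ≤ τ - σ := by linarith [hrpos]
    have hsub2 : Set.Icc ((τ - r) - σ) (τ - σ) ⊆ Set.Ioo a b := by
      intro x hx
      have hx' : x ∈ Set.Icc (t₀ - δ₂) t₀ := by
        refine hwinsub σ hσ x ⟨?_, hx.2⟩
        have := hx.1; linarith
      exact (hwin x hx').1
    have hder : ∀ x ∈ Set.uIcc ((τ - r) - σ) (τ - σ), HasDerivAt g (D x) x := by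
      intro x hx
      rw [Set.uIcc_of_le hord] at hx
      exact hg x (hsub2 hx)
    have hDint : IntervalIntegrable D volume ((τ - r) - σ) (τ - σ) := by
      refine ContinuousOn.intervalIntegrable ?_
      rw [Set.uIcc_of_le hord]
      exact hDcont.mono hsub2
    have hftc := intervalIntegral.integral_eq_sub_of_hasDerivAt hder hDint
    rw [show g (τ - σ) - g ((τ - r) - σ) = ∫ x in ((τ - r) - σ)..(τ - σ), D x from by
      rw [hftc]]
    calc (∫ x in ((τ - r) - σ)..(τ - σ), D x) ≤ ∫ _x in ((τ - r) - σ)..(τ - σ), (c + ε') := by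
          refine intervalIntegral.integral_mono_on hord hDint intervalIntegrable_const ?_
          intro x hx
          have hx' : x ∈ Set.Icc (t₀ - δ₂) t₀ := by
            refine hwinsub σ hσ x ⟨?_, hx.2⟩
            have := hx.1; linarith
          have habs := (hwin x hx').2
          have := (abs_lt.mp habs).2
          linarith
      _ = r * (c + ε') := by
          rw [intervalIntegral.integral_const, smul_eq_mul]
          ring_nf
  have hgC : ContinuousOn g (Set.Icc (t₀ - δ₂) t₀) := fun x hx =>
    ((hg x (hwin x hx).1).continuousAt).continuousWithinAt
  have hupint1 : IntervalIntegrable (fun σ => g (τ - σ)) volume 0 h := by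
    refine ContinuousOn.intervalIntegrable ?_
    rw [Set.uIcc_of_le hhpos.le]
    refine ContinuousOn.comp hgC ((continuous_const.sub continuous_id).continuousOn) ?_
    intro σ hσ
    exact hwinsub σ hσ (τ - σ) ⟨by linarith [hrpos], le_rfl⟩
  have hupint2 : IntervalIntegrable (fun σ => g ((τ - r) - σ)) volume 0 h := by
    refine ContinuousOn.intervalIntegrable ?_
    rw [Set.uIcc_of_le hhpos.le]
    refine ContinuousOn.comp hgC ((continuous_const.sub continuous_id).continuousOn) ?_
    intro σ hσ
    exact hwinsub σ hσ ((τ - r) - σ) ⟨le_rfl, by linarith [hrpos]⟩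
  have hup : (∫ σ in (0:ℝ)..h, g (τ - σ)) - (∫ σ in (0:ℝ)..h, g ((τ - r) - σ))
      ≤ h * (r * (c + ε')) := by
    rw [← intervalIntegral.integral_sub hupint1 hupint2]
    calc (∫ σ in (0:ℝ)..h, (g (τ - σ) - g ((τ - r) - σ)))
        ≤ ∫ _σ in (0:ℝ)..h, (r * (c + ε')) := by
          refine intervalIntegral.integral_mono_on hhpos.le (hupint1.sub hupint2)
            intervalIntegrable_const hup1
      _ = h * (r * (c + ε')) := by
          rw [intervalIntegral.integral_const, smul_eq_mul, sub_zero]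
  -- combine everything
  have hmain : -(2 * C₀ * r) * (∫ x in (0:ℝ)..r, k x) ≤ h * (r * (c + ε')) := by
    calc -(2 * C₀ * r) * (∫ x in (0:ℝ)..r, k x)
        ≤ (∫ w in (0:ℝ)..τ, k (τ - w) * Φ w) -
          (∫ w in (0:ℝ)..(τ - r), k (τ - r - w) * Φ w) := hlow
      _ = (∫ σ in (0:ℝ)..h, g (τ - σ)) - (∫ σ in (0:ℝ)..h, g ((τ - r) - σ)) := by
          rw [hA, hB]
      _ ≤ h * (r * (c + ε')) := hup
  -- final arithmetic contradiction
  have hKrub : (2 * C₀ * r) * (∫ x in (0:ℝ)..r, k x)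
      ≤ (2 * C₀ * r) * (ε' * h / (2 * C₀ + 1)) :=
    mul_le_mul_of_nonneg_left hKr (by positivity)
  have hfrac : (2 * C₀ * r) * (ε' * h / (2 * C₀ + 1)) ≤ ε' * h * r := by
    have heq : (2 * C₀ * r) * (ε' * h / (2 * C₀ + 1))
        = (2 * C₀ / (2 * C₀ + 1)) * (ε' * h * r) := by
      field_simp
    rw [heq]
    refine mul_le_of_le_one_left (by positivity) ?_
    rw [div_le_one (by positivity)]
    linarith
  have h1 : -(ε' * h * r) ≤ h * (r * (c + ε')) := by
    have h2 := le_trans hKrub hfrac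
    linarith [hmain]
  have hrhpos : 0 < h * r := mul_pos hhpos hrpos
  have hfinal : 0 ≤ c + 2 * ε' := by
    by_contra hneg
    push_neg at hneg
    have hx : h * (r * (c + ε')) + ε' * h * r = (h * r) * (c + 2 * ε') := by ring
    have hy : (h * r) * (c + 2 * ε') < 0 := mul_neg_of_pos_of_neg hrhpos hneg
    linarith only [h1, hx, hy]
  rw [hε'def] at hfinal
  linarith
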